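/- Let N and p be positive integers with p < N. Then ∑_{l=−N}^{N−1} (2·cos(lπ/(2N)))^{4p} = 2N · C(4p, 2p), where C(4p, 2p) is the central binomial coefficient. -/

import Mathlib

open scoped Real

open Finset in
lemma geom_zsum_eq_zero {w : ℂ} (n : ℕ) (hw0 : w ≠ 0)
    (hw1 : w ≠ 1) (hwn : w ^ (2 * n) = 1) :
    ∑ l ∈ Finset.Icc (-(n : ℤ)) ((n : ℤ) - 1), w ^ l = 0 := by
  have hmap : Finset.Icc (-(n : ℤ)) ((n : ℤ) - 1)
      = (Finset.range (2 * n)).map ⟨fun m : ℕ => (m : ℤ) - n, show Function.Injective (fun m : ℕ => (m : ℤ) - n) by intro a b h; simp only at h; omega⟩ := by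
    ext x
    simp only [Finset.mem_Icc, Finset.mem_map, Finset.mem_range,
      Function.Embedding.coeFn_mk]
    constructor
    · rintro ⟨h1, h2⟩; exact ⟨(x + n).toNat, by omega, by omega⟩
    · rintro ⟨m, hm, rfl⟩; omega
  rw [hmap, Finset.sum_map]
  simp only [Function.Embedding.coeFn_mk]
  have h : ∀ m : ℕ, w ^ ((m : ℤ) - n) = w ^ (-(n : ℤ)) * w ^ m := by
    intro m
    rw [sub_eq_add_neg, add_comm, zpow_add₀ hw0, zpow_natCast]
  simp_rw [h, ← Finset.mul_sum]
  rw [geom_sum_eq hw1]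
  simp [hwn]

theorem sum_cos_pow_eq_central_binom
    (N p : ℕ) (hN : 0 < N) (hp : 0 < p) (hpN : p < N) :
    ∑ l ∈ Finset.Icc (-(N : ℤ)) ((N : ℤ) - 1),
        (2 * Real.cos ((l : ℝ) * π / (2 * N))) ^ (4 * p)
      = 2 * N * (Nat.choose (4 * p) (2 * p)) := by
  have hNR : (N : ℝ) ≠ 0 := by exact_mod_cast hN.ne'
  have hNC : (N : ℂ) ≠ 0 := by exact_mod_cast hN.ne'
  set ζ : ℂ := Complex.exp (Real.pi * Complex.I / (2 * N)) with hζdef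
  have hζ0 : ζ ≠ 0 := Complex.exp_ne_zero _
  -- step 1: term rewriting
  have hterm : ∀ l : ℤ, ((2 : ℂ) * Complex.cos ((l : ℂ) * π / (2 * N)))
      = ζ ^ l + ζ ^ (-l) := by
    intro l
    rw [Complex.cos, hζdef, ← Complex.exp_int_mul, ← Complex.exp_int_mul]
    push_cast
    ring_nf
  -- inner geometric sum
  have hinner : ∀ k : ℤ, k ≠ 0 → |k| < 2 * (N : ℤ) →
      ∑ l ∈ Finset.Icc (-(N : ℤ)) ((N : ℤ) - 1), (ζ ^ (2 * k)) ^ l = 0 := by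
    intro k hk hk2
    apply geom_zsum_eq_zero N (zpow_ne_zero _ hζ0)
    · -- ζ ^ (2k) ≠ 1
      rw [hζdef, ← Complex.exp_int_mul, Ne, Complex.exp_eq_one_iff]
      rintro ⟨n, hn⟩
      have hπ : (π : ℂ) ≠ 0 := by exact_mod_cast Real.pi_ne_zero
      have hI : Complex.I ≠ 0 := Complex.I_ne_zero
      have h2N : (2 * (N : ℂ)) ≠ 0 := by
        simp [hNC]
      have hπI : (π : ℂ) * Complex.I ≠ 0 := mul_ne_zero hπ hI
      have : (2 * k : ℂ) = n * (2 * (2 * N)) := by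
        field_simp at hn
        have h' : (2 * k : ℂ) * ((π : ℂ) * Complex.I)
            = (n * (2 * (2 * N))) * ((π : ℂ) * Complex.I) := by
          push_cast at hn; linear_combination ((π : ℂ) * Complex.I) * hn
        exact mul_right_cancel₀ hπI h'
      have hk' : (2 * k : ℤ) = n * (2 * (2 * N)) := by exact_mod_cast this
      rcases eq_or_ne n 0 with rfl | hn0
      · omega
      · have : 2 * (2 * (N : ℤ)) ≤ |2 * k| := by
          calc (2 * (2 * (N : ℤ))) = 1 * (2 * (2 * N)) := by ring
          _ ≤ |n| * (2 * (2 * N)) := by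
              have : 1 ≤ |n| := Int.one_le_abs hn0
              have h2 : (0 : ℤ) ≤ 2 * (2 * N) := by positivity
              exact mul_le_mul_of_nonneg_right this h2
          _ = |n * (2 * (2 * N))| := by
              rw [abs_mul]; congr 1; rw [abs_of_nonneg]; positivity
          _ = |2 * k| := by rw [hk']
        rw [abs_mul] at this
        simp at this
        omega
    · -- (ζ ^ (2k)) ^ (2N) = 1
      rw [← zpow_natCast, hζdef, ← Complex.exp_int_mul, ← Complex.exp_int_mul]
      have : (((2 * N : ℕ) : ℤ) : ℂ) * ((2 * k : ℤ) * ((π : ℂ) * Complex.I / (2 * N)))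
          = (k : ℂ) * (2 * π * Complex.I) := by
        push_cast
        field_simp
      rw [this, ← Complex.exp_int_mul_two_pi_mul_I k]
  -- complex version of the statement
  have key : ∑ l ∈ Finset.Icc (-(N : ℤ)) ((N : ℤ) - 1),
      ((2 : ℂ) * Complex.cos ((l : ℂ) * π / (2 * N))) ^ (4 * p)
      = 2 * N * (Nat.choose (4 * p) (2 * p)) := by
    have expand : ∀ l : ℤ, ((2 : ℂ) * Complex.cos ((l : ℂ) * π / (2 * N))) ^ (4 * p)
        = ∑ s ∈ Finset.range (4 * p + 1),
            (ζ ^ (2 * ((s : ℤ) - 2 * p))) ^ l * (Nat.choose (4 * p) s : ℂ) := by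
      intro l
      rw [hterm l, add_pow]
      refine Finset.sum_congr rfl fun s hs => ?_
      simp only [Finset.mem_range] at hs
      congr 1
      rw [← zpow_natCast (ζ ^ l) s, ← zpow_natCast (ζ ^ (-l)) (4 * p - s),
        ← zpow_mul, ← zpow_mul, ← zpow_add₀ hζ0, ← zpow_mul]
      congr 1
      have : ((4 * p - s : ℕ) : ℤ) = 4 * p - s := by omega
      push_cast [this]
      ring
    simp_rw [expand]
    rw [Finset.sum_comm]
    have hsum : ∀ s ∈ Finset.range (4 * p + 1),
        ∑ l ∈ Finset.Icc (-(N : ℤ)) ((N : ℤ) - 1),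
          (ζ ^ (2 * ((s : ℤ) - 2 * p))) ^ l * (Nat.choose (4 * p) s : ℂ)
        = if s = 2 * p then 2 * N * (Nat.choose (4 * p) (2 * p) : ℂ) else 0 := by
      intro s hs
      simp only [Finset.mem_range] at hs
      rw [← Finset.sum_mul]
      rcases eq_or_ne s (2 * p) with rfl | hne
      · simp only [if_pos rfl]
        have h0 : 2 * (((2 * p : ℕ) : ℤ) - 2 * p) = 0 := by push_cast; ring
        rw [h0, zpow_zero]
        simp only [one_zpow, Finset.sum_const, nsmul_eq_mul, Int.card_Icc]
        have hcard : ((N : ℤ) - 1 + 1 - -(N : ℤ)).toNat = 2 * N := by omega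
        rw [hcard]
        push_cast
        ring
      · rw [if_neg hne, hinner ((s : ℤ) - 2 * p) (by omega) (by
          rw [abs_lt]; omega), zero_mul]
    rw [Finset.sum_congr rfl hsum, Finset.sum_ite_eq' (Finset.range (4 * p + 1))]
    simp [Nat.lt_succ_iff]
    omega
  -- deduce real version
  have cast_eq : ((∑ l ∈ Finset.Icc (-(N : ℤ)) ((N : ℤ) - 1),
      (2 * Real.cos ((l : ℝ) * π / (2 * N))) ^ (4 * p) : ℝ) : ℂ)
      = ∑ l ∈ Finset.Icc (-(N : ℤ)) ((N : ℤ) - 1),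
        ((2 : ℂ) * Complex.cos ((l : ℂ) * π / (2 * N))) ^ (4 * p) := by
    push_cast [← Complex.ofReal_cos]
    norm_num
  have := cast_eq.trans key
  exact_mod_cast this
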